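/- Let x* be an optimal solution to the LP min ⟨c,x⟩ s.t. Ax = b, x ≥ 0, and suppose the corresponding integer program (same constraints with x ∈ Z^n) is feasible. Then there exists an optimal solution x̂ of the integer program with ‖x̂ − x*‖_∞ ≤ n · κ̄_A. -/

import Mathlib

open Finset

variable {ι : Type*} [Fintype ι] [DecidableEq ι]

/-- `y` conforms to `x` if `x i * y i > 0` whenever `y i ≠ 0`. -/
def Conforms (y x : ι → ℝ) : Prop := ∀ i, y i ≠ 0 → x i * y i > 0

/-- An elementary vector of `W`: a support-minimal nonzero vector of `W`. -/
def IsElementary (W : Submodule ℝ (ι → ℝ)) (g : ι → ℝ) : Prop :=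
  g ∈ W ∧ g ≠ 0 ∧
    ∀ h ∈ W, h ≠ 0 → {i | h i ≠ 0} ⊆ {i | g i ≠ 0} → {i | h i ≠ 0} = {i | g i ≠ 0}

/-- The fractional circuit imbalance measure `κ_W`. -/
noncomputable def kappa (W : Submodule ℝ (ι → ℝ)) : ℝ :=
  sSup ({1} ∪ {t : ℝ | ∃ g : ι → ℝ, IsElementary W g ∧
    ∃ i j, g i ≠ 0 ∧ g j ≠ 0 ∧ t = |g j| / |g i|})

/-- An integer elementary vector, normalized so that the gcd of its entries is 1. -/
def IsIntElementary (W : Submodule ℝ (ι → ℝ)) (g : ι → ℤ) : Prop :=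
  IsElementary W (fun i => (g i : ℝ)) ∧ Finset.univ.gcd (fun i => (g i).natAbs) = 1

/-- The max-circuit imbalance measure `κ̄_W`. -/
noncomputable def barKappa (W : Submodule ℝ (ι → ℝ)) : ℕ :=
  sSup {k : ℕ | ∃ g : ι → ℤ, IsIntElementary W g ∧
    k = Finset.univ.sup fun i => (g i).natAbs}

/-- The lcm-circuit imbalance measure `κ̇_W`: the least positive integer divisible by
every entry of every normalized integer elementary vector. -/
noncomputable def dotKappa (W : Submodule ℝ (ι → ℝ)) : ℕ :=
  sInf {k : ℕ | 0 < k ∧ ∀ g : ι → ℤ, IsIntElementary W g → ∀ i, g i ≠ 0 → (g i).natAbs ∣ k}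

/-- A rational linear subspace: one spanned by rational vectors. -/
def IsRationalSubspace (W : Submodule ℝ (ι → ℝ)) : Prop :=
  ∃ S : Set (ι → ℚ), W = Submodule.span ℝ ((fun v : ι → ℚ => fun i => ((v i : ℝ))) '' S)

/-- The orthogonal complement of `W` in `ℝ^ι` with the standard inner product. -/
def orthComp (W : Submodule ℝ (ι → ℝ)) : Submodule ℝ (ι → ℝ) where
  carrier := {v | ∀ w ∈ W, ∑ i, v i * w i = 0}
  add_mem' := by
    intro a b ha hb w hw
    have := ha w hw
    have := hb w hw
    simp only [Set.mem_setOf_eq, Pi.add_apply, add_mul, Finset.sum_add_distrib, *]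
    ring
  zero_mem' := by intro w hw; simp
  smul_mem' := by
    intro c a ha w hw
    have h := ha w hw
    simp only [Set.mem_setOf_eq, Pi.smul_apply, smul_eq_mul, mul_assoc, ← Finset.mul_sum, h,
      mul_zero]

section IPProximityAux

open Matrix
open scoped Classical

variable {m n : ℕ}

private lemma sign_mul_trans {a b c : ℝ} (h1 : 0 < a * b) (h2 : 0 < b * c) : 0 < a * c := by
  rcases mul_pos_iff.1 h1 with ⟨ha, hb⟩ | ⟨ha, hb⟩ <;>
    rcases mul_pos_iff.1 h2 with ⟨hb', hc⟩ | ⟨hb', hc⟩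
  · exact mul_pos ha hc
  · linarith
  · linarith
  · exact mul_pos_of_neg_of_neg ha hc

private lemma elementary_prop {W : Submodule ℝ (Fin n → ℝ)} {g h : Fin n → ℝ}
    (hg : IsElementary W g) (hhW : h ∈ W) (hsupp : ∀ i, h i ≠ 0 → g i ≠ 0) :
    ∃ t : ℝ, ∀ i, h i = t * g i := by
  by_cases h0 : h = 0
  · exact ⟨0, fun i => by simp [h0]⟩
  · obtain ⟨i0, hi0⟩ : ∃ i, h i ≠ 0 := by
      by_contra hc; push_neg at hc; exact h0 (funext fun i => hc i)
    have hgi0 : g i0 ≠ 0 := hsupp i0 hi0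
    refine ⟨h i0 / g i0, fun i => ?_⟩
    by_contra hne
    set t := h i0 / g i0 with ht
    set h' : Fin n → ℝ := h - t • g with hh'
    have hmem : h' ∈ W := W.sub_mem hhW (W.smul_mem t hg.1)
    have hne0 : h' ≠ 0 := by
      intro hz
      apply hne
      have := congrFun hz i
      simp only [hh', Pi.sub_apply, Pi.smul_apply, smul_eq_mul, Pi.zero_apply,
        sub_eq_zero] at this
      exact this
    have hsub : {j | h' j ≠ 0} ⊆ {j | g j ≠ 0} := by
      intro j hj
      simp only [Set.mem_setOf_eq, hh', Pi.sub_apply, Pi.smul_apply, smul_eq_mul] at hj ⊢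
      intro hgj
      rcases eq_or_ne (h j) 0 with h1 | h1
      · exact hj (by rw [h1, hgj, mul_zero, sub_zero])
      · exact hsupp j h1 hgj
    have heq := hg.2.2 h' hmem hne0 hsub
    have hi0mem : i0 ∈ {j | g j ≠ 0} := hgi0
    rw [← heq] at hi0mem
    apply hi0mem
    show h i0 - t * g i0 = 0
    rw [ht, div_mul_cancel₀ _ hgi0, sub_self]

private lemma isElementary_smul {W : Submodule ℝ (Fin n → ℝ)} {g : Fin n → ℝ}
    (hg : IsElementary W g) {t : ℝ} (ht : t ≠ 0) : IsElementary W (t • g) := by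
  refine ⟨W.smul_mem t hg.1, ?_, ?_⟩
  · simp only [ne_eq, smul_eq_zero, ht, false_or]
    exact hg.2.1
  · intro h hh hh0 hsub
    have hset : {i | (t • g) i ≠ 0} = {i | g i ≠ 0} := by
      ext i; simp [ht]
    rw [hset] at hsub ⊢
    exact hg.2.2 h hh hh0 hsub

private lemma exists_conformal_elementary {W : Submodule ℝ (Fin n → ℝ)} {w : Fin n → ℝ}
    (hwW : w ∈ W) (hw0 : w ≠ 0) :
    ∃ g, IsElementary W g ∧ ∀ i, g i ≠ 0 → 0 < w i * g i := by
  set S : Set (Fin n → ℝ) := {v | v ∈ W ∧ v ≠ 0 ∧ ∀ i, v i ≠ 0 → 0 < w i * v i} with hS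
  have hwS : w ∈ S := ⟨hwW, hw0, fun i hi => mul_self_pos.2 hi⟩
  set cardf : (Fin n → ℝ) → ℕ := fun v => (Finset.univ.filter fun i => v i ≠ 0).card with hcardf
  set K : Set ℕ := cardf '' S with hK
  have hKne : K.Nonempty := ⟨cardf w, w, hwS, rfl⟩
  obtain ⟨v, hvS, hvcard⟩ := Nat.sInf_mem hKne
  have hmin : ∀ u ∈ S, cardf v ≤ cardf u := by
    intro u hu
    rw [hvcard]
    exact Nat.sInf_le ⟨u, hu, rfl⟩
  refine ⟨v, ⟨hvS.1, hvS.2.1, ?_⟩, hvS.2.2⟩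
  intro h hhW hh0 hsub
  by_contra hne
  have hss : {i | h i ≠ 0} ⊂ {i | v i ≠ 0} := ⟨hsub, fun habs => hne (le_antisymm hsub habs)⟩
  obtain ⟨i1, hi1v, hi1h⟩ := Set.exists_of_ssubset hss
  simp only [Set.mem_setOf_eq, not_not] at hi1v hi1h
  -- key : for any h2 in W whose support is inside that of h, with some positive product
  have key : ∀ h2 : Fin n → ℝ, h2 ∈ W → (∀ i, h2 i ≠ 0 → h i ≠ 0) →
      (∃ i2, 0 < v i2 * h2 i2) → False := by
    intro h2 hh2W hsupp2 ⟨i2, hi2⟩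
    have hsubv : ∀ i, h2 i ≠ 0 → v i ≠ 0 := fun i hi => hsub (hsupp2 i hi)
    set T : Finset (Fin n) := Finset.univ.filter fun i => 0 < v i * h2 i with hT
    have hTne : T.Nonempty := ⟨i2, by simp [hT, hi2]⟩
    obtain ⟨j, hjT, hjmin⟩ := T.exists_min_image (fun i => v i / h2 i) hTne
    simp only [hT, Finset.mem_filter, Finset.mem_univ, true_and] at hjT
    have hh2j : h2 j ≠ 0 := fun hz => by simp [hz] at hjT
    have hvj : v j ≠ 0 := fun hz => by simp [hz] at hjT
    set t := v j / h2 j with htdef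
    have htpos : 0 < t := by
      rcases mul_pos_iff.1 hjT with ⟨h1, h2'⟩ | ⟨h1, h2'⟩
      · exact div_pos h1 h2'
      · exact div_pos_of_neg_of_neg h1 h2'
    set v' : Fin n → ℝ := v - t • h2 with hv'
    have hv'W : v' ∈ W := W.sub_mem hvS.1 (W.smul_mem t hh2W)
    have hv'i1 : v' i1 = v i1 := by
      have : h2 i1 = 0 := by
        by_contra hcon
        exact (hsupp2 i1 hcon) hi1h
      simp [hv', this]
    have hv'ne : v' ≠ 0 := by
      intro hz
      have := congrFun hz i1
      rw [hv'i1] at this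
      exact hi1v this
    have hv'j : v' j = 0 := by
      simp only [hv', Pi.sub_apply, Pi.smul_apply, smul_eq_mul, htdef]
      rw [div_mul_cancel₀ _ hh2j, sub_self]
    have hv'conf : ∀ i, v' i ≠ 0 → 0 < w i * v' i := by
      intro i hi
      simp only [hv', Pi.sub_apply, Pi.smul_apply, smul_eq_mul] at hi ⊢
      rcases eq_or_ne (h2 i) 0 with hz | hz
      · rw [hz, mul_zero, sub_zero] at hi ⊢
        exact hvS.2.2 i hi
      · have hvi : v i ≠ 0 := hsubv i hz
        have hwv : 0 < w i * v i := hvS.2.2 i hvi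
        rcases lt_or_gt_of_ne (fun hc : v i * h2 i = 0 => by
            rcases mul_eq_zero.1 hc with h | h
            exacts [hvi h, hz h]) with hneg | hpos
        · -- v i * h2 i < 0 : w i * h2 i < 0
          have hwh2 : w i * h2 i < 0 := by
            by_contra hge
            push_neg at hge
            have h1 : (w i * v i) * (v i * h2 i) < 0 := mul_neg_of_pos_of_neg hwv hneg
            have h2' : (w i * v i) * (v i * h2 i) = (w i * h2 i) * (v i * v i) := by ring
            have h3 : 0 ≤ (w i * h2 i) * (v i * v i) := mul_nonneg hge (mul_self_nonneg _)
            linarith [h2' ▸ h1]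
          have : t * (w i * h2 i) < 0 := mul_neg_of_pos_of_neg htpos hwh2
          nlinarith
        · -- v i * h2 i > 0 : i ∈ T, minimality
          have hiT : i ∈ T := by simp [hT, hpos]
          have hle : t ≤ v i / h2 i := hjmin i hiT
          have hwh2 : 0 < w i * h2 i := sign_mul_trans hwv hpos
          have hrewrite : v i - t * h2 i = h2 i * (v i / h2 i - t) := by
            field_simp
          rw [hrewrite]
          have hne' : v i / h2 i - t ≠ 0 := by
            intro hc
            apply hi
            rw [hrewrite, hc, mul_zero]
          have hlt : 0 < v i / h2 i - t := lt_of_le_of_ne (by linarith) (Ne.symm hne')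
          calc (0:ℝ) < (w i * h2 i) * (v i / h2 i - t) := mul_pos hwh2 hlt
            _ = w i * (h2 i * (v i / h2 i - t)) := by ring
    have hv'S : v' ∈ S := ⟨hv'W, hv'ne, hv'conf⟩
    -- cardinality decreases
    have hsubset : (Finset.univ.filter fun i => v' i ≠ 0) ⊆
        (Finset.univ.filter fun i => v i ≠ 0) := by
      intro i hi
      simp only [Finset.mem_filter, Finset.mem_univ, true_and] at hi ⊢
      intro hvi
      apply hi
      have hz : h2 i = 0 := by
        by_contra hc
        exact (hsubv i hc) hvi
      simp [hv', hz, hvi]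
    have hssub : (Finset.univ.filter fun i => v' i ≠ 0) ⊂
        (Finset.univ.filter fun i => v i ≠ 0) := by
      refine ⟨hsubset, fun hcon => ?_⟩
      have hj1 : j ∈ (Finset.univ.filter fun i => v i ≠ 0) := by simp [hvj]
      have hj2 := hcon hj1
      simp only [Finset.mem_filter, Finset.mem_univ, true_and] at hj2
      exact hj2 hv'j
    have := hmin v' hv'S
    have hlt := Finset.card_lt_card hssub
    simp only [hcardf] at this hlt
    omega
  -- apply key to h or -h
  obtain ⟨i2, hi2⟩ : ∃ i, h i ≠ 0 := by
    by_contra hc; push_neg at hc; exact hh0 (funext fun i => hc i)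
  have hvi2 : v i2 ≠ 0 := hsub hi2
  rcases lt_or_gt_of_ne (fun hc : v i2 * h i2 = 0 => by
      rcases mul_eq_zero.1 hc with h' | h'
      exacts [hvi2 h', hi2 h']) with hneg | hpos
  · exact key (-h) (W.neg_mem hhW) (fun i hi => by simpa using hi)
      ⟨i2, by simpa using neg_pos.2 hneg⟩
  · exact key h hhW (fun i hi => hi) ⟨i2, hpos⟩


private lemma exists_int_elementary (A : Matrix (Fin m) (Fin n) ℤ) {g : Fin n → ℝ}
    (hg : IsElementary (LinearMap.ker (A.map (Int.cast : ℤ → ℝ)).mulVecLin) g) :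
    ∃ (z : Fin n → ℤ) (t : ℝ), 0 < t ∧ (∀ i, (z i : ℝ) = t * g i) ∧
      IsIntElementary (LinearMap.ker (A.map (Int.cast : ℤ → ℝ)).mulVecLin) z := by
  set W := LinearMap.ker (A.map (Int.cast : ℤ → ℝ)).mulVecLin with hW
  -- the rational matrix with rows of A and unit rows outside the support of g
  set M : Matrix (Fin m ⊕ Fin n) (Fin n) ℚ :=
    Matrix.of (Sum.elim (fun i j => (A i j : ℚ))
      (fun i j => if g i = 0 ∧ i = j then 1 else 0)) with hM
  have hgker : (A.map (Int.cast : ℤ → ℝ)).mulVec g = 0 := by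
    have := hg.1
    rwa [hW, LinearMap.mem_ker, Matrix.mulVecLin_apply] at this
  -- g is in the real kernel of M
  have hMg : (M.map ((↑) : ℚ → ℝ)).mulVec g = 0 := by
    funext r
    cases r with
    | inl i =>
      have := congrFun hgker i
      simp only [Matrix.mulVec, dotProduct, Matrix.map_apply, Matrix.of_apply,
        Sum.elim_inl, Pi.zero_apply, hM] at this ⊢
      push_cast
      convert this using 2 with j
    | inr i =>
      simp only [Matrix.mulVec, dotProduct, Matrix.map_apply, Matrix.of_apply,
        Sum.elim_inr, Pi.zero_apply, hM]
      rcases eq_or_ne (g i) 0 with hgi | hgi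
      · have : ∀ j, (((if g i = 0 ∧ i = j then (1:ℚ) else 0) : ℚ) : ℝ) * g j
            = if i = j then g j else 0 := by
          intro j
          simp [hgi]
          split <;> simp
        rw [Finset.sum_congr rfl fun j _ => this j]
        simp [Finset.sum_ite_eq, hgi]
      · have : ∀ j, (((if g i = 0 ∧ i = j then (1:ℚ) else 0) : ℚ) : ℝ) * g j = 0 := by
          intro j
          simp [hgi]
        rw [Finset.sum_congr rfl fun j _ => this j]
        simp
  -- hence in the real kernel of the Gram matrix
  have hkerR := Matrix.ker_mulVecLin_transpose_mul_self (M.map ((↑) : ℚ → ℝ))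
  have hNg : (((M.map ((↑) : ℚ → ℝ))ᵀ * (M.map ((↑) : ℚ → ℝ)))).mulVec g = 0 := by
    have hmem : g ∈ LinearMap.ker (M.map ((↑) : ℚ → ℝ)).mulVecLin := by
      rw [LinearMap.mem_ker, Matrix.mulVecLin_apply]; exact hMg
    rw [← hkerR, LinearMap.mem_ker, Matrix.mulVecLin_apply] at hmem
    exact hmem
  -- so the real Gram determinant vanishes, hence the rational one does
  have hdetR : ((M.map ((↑) : ℚ → ℝ))ᵀ * (M.map ((↑) : ℚ → ℝ))).det = 0 :=
    Matrix.exists_mulVec_eq_zero_iff.1 ⟨g, hg.2.1, hNg⟩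
  have hmapmul : ((Mᵀ * M).map ((Rat.castHom ℝ) : ℚ →+* ℝ))
      = (M.map ((↑) : ℚ → ℝ))ᵀ * (M.map ((↑) : ℚ → ℝ)) := by
    rw [Matrix.map_mul]
    rfl
  have hdetQ : (Mᵀ * M).det = 0 := by
    have h1 := (RingHom.map_det (Rat.castHom ℝ) (Mᵀ * M)).symm
    rw [RingHom.mapMatrix_apply, hmapmul, hdetR] at h1
    have h2 : (((Mᵀ * M).det : ℚ) : ℝ) = 0 := h1.symm
    exact_mod_cast h2
  -- a nonzero rational kernel vector
  obtain ⟨q, hq0, hNq⟩ := Matrix.exists_mulVec_eq_zero_iff.2 hdetQ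
  have hMq : M.mulVec q = 0 := by
    have hmem : q ∈ LinearMap.ker (Mᵀ * M).mulVecLin := by
      rw [LinearMap.mem_ker, Matrix.mulVecLin_apply]; exact hNq
    rw [Matrix.ker_mulVecLin_transpose_mul_self, LinearMap.mem_ker,
      Matrix.mulVecLin_apply] at hmem
    exact hmem
  have hAq : ∀ i, ∑ j, (A i j : ℚ) * q j = 0 := by
    intro i
    have := congrFun hMq (Sum.inl i)
    simpa [hM, Matrix.mulVec, dotProduct] using this
  have hqsupp : ∀ i, g i = 0 → q i = 0 := by
    intro i hgi
    have := congrFun hMq (Sum.inr i)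
    simp only [hM, Matrix.mulVec, dotProduct, Matrix.of_apply, Sum.elim_inr,
      Pi.zero_apply, hgi, true_and] at this
    simpa [ite_mul] using this
  -- the real cast of q
  set qR : Fin n → ℝ := fun i => ((q i : ℚ) : ℝ) with hqR
  have hqRW : qR ∈ W := by
    rw [hW, LinearMap.mem_ker, Matrix.mulVecLin_apply]
    funext i
    have := hAq i
    simp only [Matrix.mulVec, dotProduct, Matrix.map_apply, Pi.zero_apply, hqR]
    have : ((∑ j, (A i j : ℚ) * q j : ℚ) : ℝ) = 0 := by rw [hAq i]; simp
    push_cast at this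
    convert this using 2 with j
  have hqRsupp : ∀ i, qR i ≠ 0 → g i ≠ 0 := by
    intro i hi hgi
    exact hi (by simp [hqR, hqsupp i hgi])
  obtain ⟨t0, ht0⟩ := elementary_prop hg hqRW hqRsupp
  have hqRne : qR ≠ 0 := by
    intro hz
    apply hq0
    funext i
    have := congrFun hz i
    simp only [hqR, Pi.zero_apply] at this
    exact_mod_cast this
  have ht0ne : t0 ≠ 0 := by
    intro hz
    apply hqRne
    funext i
    rw [ht0 i, hz, zero_mul, Pi.zero_apply]
  -- reduce to the case t0 > 0 (otherwise use -q)
  have main : ∀ (q' : Fin n → ℚ) (t1 : ℝ), 0 < t1 → (∀ i, ((q' i : ℚ) : ℝ) = t1 * g i) →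
      ∃ (z : Fin n → ℤ) (t : ℝ), 0 < t ∧ (∀ i, (z i : ℝ) = t * g i) ∧ IsIntElementary W z := by
    intro q' t1 ht1 hq'
    obtain ⟨istar, histar⟩ : ∃ i, g i ≠ 0 := by
      by_contra hc; push_neg at hc; exact hg.2.1 (funext fun i => hc i)
    set D : ℕ := Finset.univ.lcm (fun i => (q' i).den) with hD
    have hDden : ∀ i, ((q' i).den : ℤ) ∣ (D : ℤ) :=
      fun i => Int.natCast_dvd_natCast.2 (Finset.dvd_lcm (Finset.mem_univ i))
    have hDne : D ≠ 0 := by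
      rw [hD]
      intro h0
      obtain ⟨i, -, hi⟩ := Finset.lcm_eq_zero_iff.1 h0
      exact (q' i).den_pos.ne' hi
    set z0 : Fin n → ℤ := fun i => (q' i).num * ((D : ℤ) / ((q' i).den : ℤ)) with hz0
    have hz0Q : ∀ i, ((z0 i : ℤ) : ℚ) = q' i * (D : ℚ) := by
      intro i
      have hZ : z0 i * ((q' i).den : ℤ) = (q' i).num * (D : ℤ) := by
        rw [hz0]
        simp only []
        rw [mul_assoc, Int.ediv_mul_cancel (hDden i)]
      have hden : ((q' i).den : ℚ) ≠ 0 := Nat.cast_ne_zero.2 (q' i).den_pos.ne'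
      have hq'eq : q' i = ((q' i).num : ℚ) / ((q' i).den : ℚ) := (Rat.num_div_den _).symm
      rw [hq'eq, div_mul_eq_mul_div, eq_div_iff hden]
      exact_mod_cast hZ
    have hz0R : ∀ i, ((z0 i : ℤ) : ℝ) = (t1 * (D : ℝ)) * g i := by
      intro i
      have h1 : ((z0 i : ℤ) : ℝ) = (((q' i * (D : ℚ)) : ℚ) : ℝ) := by
        exact_mod_cast congrArg (fun x : ℚ => (x : ℝ)) (hz0Q i)
      rw [h1]
      push_cast
      rw [hq' i]
      ring
    have hz0star : z0 istar ≠ 0 := by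
      intro h0
      have h1 := (hz0R istar).symm
      rw [h0] at h1
      simp only [Int.cast_zero] at h1
      have h2 : t1 * (D : ℝ) ≠ 0 :=
        mul_ne_zero ht1.ne' (Nat.cast_ne_zero.2 hDne)
      rcases mul_eq_zero.1 h1 with h | h
      · exact h2 h
      · exact histar h
    set G : ℕ := Finset.univ.gcd (fun i => (z0 i).natAbs) with hG
    have hGne : G ≠ 0 := by
      intro h0
      have := Finset.gcd_eq_zero_iff.1 (hG ▸ h0) istar (Finset.mem_univ istar)
      exact hz0star (Int.natAbs_eq_zero.1 this)
    have hGdvd : ∀ i, (G : ℤ) ∣ z0 i := by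
      intro i
      have h1 : G ∣ (z0 i).natAbs := Finset.gcd_dvd (Finset.mem_univ i)
      exact dvd_trans (Int.natCast_dvd_natCast.2 h1) (Int.natAbs_dvd.2 dvd_rfl)
    set z : Fin n → ℤ := fun i => z0 i / (G : ℤ) with hzdef
    have hzG : ∀ i, z i * (G : ℤ) = z0 i := fun i => Int.ediv_mul_cancel (hGdvd i)
    set t : ℝ := t1 * (D : ℝ) / (G : ℝ) with htdef2
    have hGR : (G : ℝ) ≠ 0 := Nat.cast_ne_zero.2 hGne
    have htpos : 0 < t :=
      div_pos (mul_pos ht1 (by exact_mod_cast Nat.pos_of_ne_zero hDne))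
        (by exact_mod_cast Nat.pos_of_ne_zero hGne)
    have hzR : ∀ i, ((z i : ℤ) : ℝ) = t * g i := by
      intro i
      have h1 := congrArg (fun x : ℤ => (x : ℝ)) (hzG i)
      push_cast at h1
      rw [hz0R i] at h1
      rw [htdef2, div_mul_eq_mul_div, eq_div_iff hGR]
      linear_combination h1
    have hznatabs : ∀ i, (z i).natAbs = (z0 i).natAbs / G := by
      intro i
      rw [hzdef]
      simp only []
      rw [Int.natAbs_ediv_of_dvd (hGdvd i), Int.natAbs_natCast]
    have hgcd1 : Finset.univ.gcd (fun i => (z i).natAbs) = 1 := by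
      have hkey := Finset.gcd_div_eq_one (f := fun i => (z0 i).natAbs)
        (Finset.mem_univ istar) (fun h => hz0star (Int.natAbs_eq_zero.1 h))
      calc Finset.univ.gcd (fun i => (z i).natAbs)
          = Finset.univ.gcd (fun i => (z0 i).natAbs / G) :=
            Finset.gcd_congr rfl fun i _ => hznatabs i
        _ = 1 := hkey
    have hzcastfun : (fun i => ((z i : ℤ) : ℝ)) = t • g := by
      funext i
      rw [hzR i]
      simp
    refine ⟨z, t, htpos, hzR, ?_, hgcd1⟩
    rw [hzcastfun]
    exact isElementary_smul hg htpos.ne'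
  rcases lt_or_gt_of_ne ht0ne with hneg | hpos
  · refine main (-q) (-t0) (by linarith) (fun i => ?_)
    have h := ht0 i
    simp only [hqR] at h
    simp only [Pi.neg_apply, Rat.cast_neg, h]
    ring
  · exact main q t0 hpos ht0


private lemma natAbs_eq_of_same_support {W : Submodule ℝ (Fin n → ℝ)} {g g' : Fin n → ℤ}
    (hg : IsIntElementary W g) (hg' : IsIntElementary W g')
    (hs : {i | g i ≠ 0} = {i | g' i ≠ 0}) : ∀ i, (g i).natAbs = (g' i).natAbs := by
  -- get a common nonzero coordinate
  obtain ⟨i0, hi0⟩ : ∃ i, g i ≠ 0 := by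
    by_contra hc
    push_neg at hc
    exact hg.1.2.1 (funext fun i => by simp [hc i])
  have hi0' : g' i0 ≠ 0 := by
    have h1 : i0 ∈ {i | g i ≠ 0} := hi0
    rw [hs] at h1
    exact h1
  -- g' is a real multiple of g
  have hsupp : ∀ i, (fun j => ((g' j : ℤ) : ℝ)) i ≠ 0 → (fun j => ((g j : ℤ) : ℝ)) i ≠ 0 := by
    intro i hi
    simp only [ne_eq, Int.cast_eq_zero] at hi ⊢
    intro hgi
    exact hi (by have : i ∈ {i | g i ≠ 0} → False := fun hc => hc hgi
                 by_contra hcon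
                 exact this (hs ▸ (by simpa using hcon)))
  obtain ⟨t, ht⟩ := elementary_prop hg.1 hg'.1.1 hsupp
  -- integer proportionality : g i0 * g' j = g' i0 * g j
  have hprop : ∀ j, g i0 * g' j = g' i0 * g j := by
    intro j
    have h1 := ht j
    have h2 := ht i0
    have : ((g i0 * g' j : ℤ) : ℝ) = ((g' i0 * g j : ℤ) : ℝ) := by
      push_cast
      rw [h1, h2]
      ring
    exact_mod_cast this
  set a : ℤ := g' i0 with ha
  set b : ℤ := g i0 with hb
  have hd : 0 < Int.gcd a b := Int.gcd_pos_of_ne_zero_left _ hi0'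
  set d : ℤ := (Int.gcd a b : ℤ) with hdd
  have hdne : d ≠ 0 := by
    simp [hdd]
    omega
  have hda : d ∣ a := Int.gcd_dvd_left a b
  have hdb : d ∣ b := Int.gcd_dvd_right a b
  set a' : ℤ := a / d with ha'
  set b' : ℤ := b / d with hb'
  have hcop : Int.gcd a' b' = 1 := Int.gcd_div_gcd_div_gcd hd
  have hprop' : ∀ j, b' * g' j = a' * g j := by
    intro j
    have h1 : d * (b' * g' j) = d * (a' * g j) := by
      have hb'' : d * b' = b := by rw [hb']; exact Int.mul_ediv_cancel' hdb
      have ha'' : d * a' = a := by rw [ha']; exact Int.mul_ediv_cancel' hda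
      calc d * (b' * g' j) = (d * b') * g' j := by ring
        _ = b * g' j := by rw [hb'']
        _ = g i0 * g' j := by rw [hb]
        _ = g' i0 * g j := hprop j
        _ = a * g j := by rw [ha]
        _ = (d * a') * g j := by rw [ha'']
        _ = d * (a' * g j) := by ring
    exact mul_left_cancel₀ hdne h1
  -- b' divides every g j, a' divides every g' j
  have hb'dvd : ∀ j, b' ∣ g j := by
    intro j
    have h1 : b' ∣ a' * g j := ⟨g' j, (hprop' j).symm⟩
    have hco : IsCoprime b' a' := Int.isCoprime_iff_gcd_eq_one.2 (by rw [Int.gcd_comm]; exact hcop)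
    exact hco.dvd_of_dvd_mul_left h1
  have ha'dvd : ∀ j, a' ∣ g' j := by
    intro j
    have h1 : a' ∣ b' * g' j := ⟨g j, hprop' j⟩
    have hco : IsCoprime a' b' := Int.isCoprime_iff_gcd_eq_one.2 hcop
    exact hco.dvd_of_dvd_mul_left h1
  have hb'1 : b'.natAbs = 1 := by
    have : b'.natAbs ∣ Finset.univ.gcd (fun i => (g i).natAbs) :=
      Finset.dvd_gcd fun j _ => Int.natAbs_dvd_natAbs.2 (hb'dvd j)
    rw [hg.2] at this
    exact Nat.dvd_one.1 this
  have ha'1 : a'.natAbs = 1 := by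
    have : a'.natAbs ∣ Finset.univ.gcd (fun i => (g' i).natAbs) :=
      Finset.dvd_gcd fun j _ => Int.natAbs_dvd_natAbs.2 (ha'dvd j)
    rw [hg'.2] at this
    exact Nat.dvd_one.1 this
  intro j
  have := congrArg Int.natAbs (hprop' j)
  rw [Int.natAbs_mul, Int.natAbs_mul, hb'1, ha'1, one_mul, one_mul] at this
  exact this.symm

private noncomputable def Fsup (W : Submodule ℝ (Fin n → ℝ)) (s : Set (Fin n)) : ℕ :=
  if h : ∃ g : Fin n → ℤ, IsIntElementary W g ∧ {i | g i ≠ 0} = s then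
    Finset.univ.sup fun i => (h.choose i).natAbs
  else 0

private lemma natAbs_le_barKappa {W : Submodule ℝ (Fin n → ℝ)} {g : Fin n → ℤ}
    (hg : IsIntElementary W g) (i : Fin n) : (g i).natAbs ≤ barKappa W := by
  have hbdd : BddAbove {k : ℕ | ∃ g : Fin n → ℤ, IsIntElementary W g ∧
      k = Finset.univ.sup fun i => (g i).natAbs} := by
    apply Set.Finite.bddAbove
    apply Set.Finite.subset (Set.finite_range (Fsup W))
    rintro k ⟨g', hg', rfl⟩
    refine ⟨{i | g' i ≠ 0}, ?_⟩
    have hex : ∃ g'' : Fin n → ℤ, IsIntElementary W g'' ∧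
        {i | g'' i ≠ 0} = {i | g' i ≠ 0} := ⟨g', hg', rfl⟩
    rw [Fsup, dif_pos hex]
    refine Finset.sup_congr rfl fun j _ => ?_
    exact natAbs_eq_of_same_support hex.choose_spec.1 hg' hex.choose_spec.2 j
  have hmem : (Finset.univ.sup fun i => (g i).natAbs) ∈ {k : ℕ | ∃ g : Fin n → ℤ,
      IsIntElementary W g ∧ k = Finset.univ.sup fun i => (g i).natAbs} := ⟨g, hg, rfl⟩
  exact le_trans (Finset.le_sup (f := fun i => (g i).natAbs) (Finset.mem_univ i)) (le_csSup hbdd hmem)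


set_option maxHeartbeats 1000000 in
private lemma decomp (A : Matrix (Fin m) (Fin n) ℤ) :
    ∀ (N : ℕ) (w : Fin n → ℝ), w ∈ LinearMap.ker (A.map (Int.cast : ℤ → ℝ)).mulVecLin →
    (Finset.univ.filter fun i => w i ≠ 0).card ≤ N →
    ∃ (k : ℕ) (lam : Fin k → ℝ) (gs : Fin k → Fin n → ℤ), k ≤ N ∧
      (∀ p, IsIntElementary (LinearMap.ker (A.map (Int.cast : ℤ → ℝ)).mulVecLin) (gs p)) ∧
      (∀ p, 0 < lam p) ∧
      (∀ p i, gs p i ≠ 0 → 0 < w i * (gs p i : ℝ)) ∧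
      (∀ i, w i = ∑ p, lam p * (gs p i : ℝ)) := by
  intro N
  induction N with
  | zero =>
    intro w hw hcard
    have hw0 : ∀ i, w i = 0 := by
      intro i
      by_contra hc
      have : i ∈ Finset.univ.filter fun i => w i ≠ 0 := by simp [hc]
      have := Finset.card_pos.2 ⟨i, this⟩
      omega
    exact ⟨0, Fin.elim0, Fin.elim0, le_rfl, fun p => p.elim0, fun p => p.elim0,
      fun p => p.elim0, fun i => by simp [hw0 i]⟩
  | succ N ih =>
    intro w hw hcard
    by_cases hw0 : w = 0
    · exact ⟨0, Fin.elim0, Fin.elim0, Nat.zero_le _, fun p => p.elim0, fun p => p.elim0,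
        fun p => p.elim0, fun i => by simp [hw0]⟩
    · obtain ⟨g, hg, hgconf⟩ := exists_conformal_elementary hw hw0
      obtain ⟨z, t, ht, hzt, hzint⟩ := exists_int_elementary A hg
      have hzconf : ∀ i, z i ≠ 0 → 0 < w i * (z i : ℝ) := by
        intro i hi
        have hzi : (z i : ℝ) ≠ 0 := Int.cast_ne_zero.2 hi
        have hgi : g i ≠ 0 := by
          intro hc
          apply hzi
          rw [hzt i, hc, mul_zero]
        have := hgconf i hgi
        rw [hzt i]
        calc (0:ℝ) < t * (w i * g i) := mul_pos ht this
          _ = w i * (t * g i) := by ring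
      have hzne : ∃ i, z i ≠ 0 := by
        by_contra hc
        push_neg at hc
        exact hzint.1.2.1 (funext fun i => by simp [hc i])
      obtain ⟨i2, hi2⟩ := hzne
      set T : Finset (Fin n) := Finset.univ.filter fun i => z i ≠ 0 with hT
      have hTne : T.Nonempty := ⟨i2, by simp [hT, hi2]⟩
      obtain ⟨j, hjT, hjmin⟩ := T.exists_min_image (fun i => w i / (z i : ℝ)) hTne
      simp only [hT, Finset.mem_filter, Finset.mem_univ, true_and] at hjT
      have hzjR : ((z j : ℤ) : ℝ) ≠ 0 := Int.cast_ne_zero.2 hjT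
      have hwzj : 0 < w j * (z j : ℝ) := hzconf j hjT
      have hwj : w j ≠ 0 :=fun hc => by simp [hc] at hwzj
      set lam0 : ℝ := w j / (z j : ℝ) with hlam0
      have hlam0pos : 0 < lam0 := by
        rcases mul_pos_iff.1 hwzj with ⟨h1, h2⟩ | ⟨h1, h2⟩
        · exact div_pos h1 h2
        · exact div_pos_of_neg_of_neg h1 h2
      set w' : Fin n → ℝ := fun i => w i - lam0 * (z i : ℝ) with hw'
      have hw'W : w' ∈ LinearMap.ker (A.map (Int.cast : ℤ → ℝ)).mulVecLin := by
        have : w' = w - lam0 • (fun i => ((z i : ℤ) : ℝ)) := by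
          funext i; simp [hw']
        rw [this]
        exact Submodule.sub_mem _ hw (Submodule.smul_mem _ _ hzint.1.1)
      have hzero : ∀ i, w i = 0 → z i = 0 := by
        intro i hi
        by_contra hc
        have := hzconf i hc
        rw [hi, zero_mul] at this
        exact lt_irrefl _ this
      have hw'sub : ∀ i, w' i ≠ 0 → w i ≠ 0 := by
        intro i hi hc
        apply hi
        simp [hw', hc, hzero i hc]
      have hw'j : w' j = 0 := by
        simp only [hw', hlam0]
        rw [div_mul_cancel₀ _ hzjR, sub_self]
      have hw'conf : ∀ i, w' i ≠ 0 → 0 < w i * w' i := by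
        intro i hi
        simp only [hw'] at hi ⊢
        rcases eq_or_ne (z i) 0 with hz | hz
        · rw [hz] at hi ⊢
          simp only [Int.cast_zero, mul_zero, sub_zero] at hi ⊢
          exact mul_self_pos.2 hi
        · have hiT : i ∈ T := by simp [hT, hz]
          have hle : lam0 ≤ w i / (z i : ℝ) := hjmin i hiT
          have hziR : ((z i : ℤ) : ℝ) ≠ 0 := Int.cast_ne_zero.2 hz
          have hwzi : 0 < w i * (z i : ℝ) := hzconf i hz
          have hrw : w i - lam0 * (z i : ℝ) = (z i : ℝ) * (w i / (z i : ℝ) - lam0) := by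
            field_simp
          rw [hrw] at hi ⊢
          have hne' : w i / (z i : ℝ) - lam0 ≠ 0 := by
            intro hc
            exact hi (by rw [hc, mul_zero])
          have hlt : 0 < w i / (z i : ℝ) - lam0 := lt_of_le_of_ne (by linarith) (Ne.symm hne')
          calc (0:ℝ) < (w i * (z i : ℝ)) * (w i / (z i : ℝ) - lam0) := mul_pos hwzi hlt
            _ = w i * ((z i : ℝ) * (w i / (z i : ℝ) - lam0)) := by ring
      have hcard' : (Finset.univ.filter fun i => w' i ≠ 0).card ≤ N := by
        have hsubset : (Finset.univ.filter fun i => w' i ≠ 0) ⊆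
            (Finset.univ.filter fun i => w i ≠ 0) := by
          intro i hi
          simp only [Finset.mem_filter, Finset.mem_univ, true_and] at hi ⊢
          exact hw'sub i hi
        have hss : (Finset.univ.filter fun i => w' i ≠ 0) ⊂
            (Finset.univ.filter fun i => w i ≠ 0) := by
          refine ⟨hsubset, fun hcon => ?_⟩
          have hj1 : j ∈ Finset.univ.filter fun i => w i ≠ 0 := by simp [hwj]
          have hj2 := hcon hj1
          simp only [Finset.mem_filter, Finset.mem_univ, true_and] at hj2
          exact hj2 hw'j
        have := Finset.card_lt_card hss
        omega
      obtain ⟨k, lam, gs, hk, hint, hlam, hconf, hsum⟩ := ih w' hw'W hcard'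
      refine ⟨k + 1, Fin.cons lam0 lam, Fin.cons z gs, by omega, ?_, ?_, ?_, ?_⟩
      · intro p
        refine Fin.cases ?_ (fun q => ?_) p
        · simp only [Fin.cons_zero]
          exact hzint
        · simp only [Fin.cons_succ]
          exact hint q
      · intro p
        refine Fin.cases ?_ (fun q => ?_) p
        · simp only [Fin.cons_zero]
          exact hlam0pos
        · simp only [Fin.cons_succ]
          exact hlam q
      · intro p
        refine Fin.cases ?_ (fun q => ?_) p
        · intro i hi
          simp only [Fin.cons_zero] at hi ⊢
          exact hzconf i hi
        · intro i hi
          simp only [Fin.cons_succ] at hi ⊢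
          have h1 := hconf q i hi
          have hw'ne : w' i ≠ 0 := by
            intro hc
            rw [hc, zero_mul] at h1
            exact lt_irrefl _ h1
          exact sign_mul_trans (hw'conf i hw'ne) h1
      · intro i
        rw [Fin.sum_univ_succ]
        simp only [Fin.cons_zero, Fin.cons_succ]
        have := hsum i
        simp only [hw'] at this
        linarith [this]


set_option maxHeartbeats 1000000 in
private lemma key_step (A : Matrix (Fin m) (Fin n) ℤ) (b : Fin m → ℝ) (c : Fin n → ℝ)
    (xstar : Fin n → ℝ)
    (hfeas : (A.map (Int.cast : ℤ → ℝ)).mulVec xstar = b ∧ ∀ i, 0 ≤ xstar i)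
    (hopt : ∀ x : Fin n → ℝ, ((A.map (Int.cast : ℤ → ℝ)).mulVec x = b ∧ ∀ i, 0 ≤ x i) →
      ∑ i, c i * xstar i ≤ ∑ i, c i * x i)
    (z : Fin n → ℤ)
    (hz : (A.map (Int.cast : ℤ → ℝ)).mulVec (fun i => ((z i : ℝ))) = b ∧ ∀ i, 0 ≤ z i) :
    ∃ xhat : Fin n → ℤ,
      ((A.map (Int.cast : ℤ → ℝ)).mulVec (fun i => ((xhat i : ℝ))) = b ∧ ∀ i, 0 ≤ xhat i) ∧
      (∑ i, c i * (xhat i : ℝ) ≤ ∑ i, c i * (z i : ℝ)) ∧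
      ∀ i, |(xhat i : ℝ) - xstar i| ≤
        n * (barKappa (LinearMap.ker (A.map (Int.cast : ℤ → ℝ)).mulVecLin) : ℝ) := by
  set W := LinearMap.ker (A.map (Int.cast : ℤ → ℝ)).mulVecLin with hW
  set w : Fin n → ℝ := fun i => xstar i - (z i : ℝ) with hwdef
  have hwW : w ∈ W := by
    rw [hW, LinearMap.mem_ker, Matrix.mulVecLin_apply]
    have heq : w = xstar - (fun i => ((z i : ℝ))) := by funext i; simp [hwdef]
    rw [heq, Matrix.mulVec_sub, hfeas.1, hz.1, sub_self]
  have hcardn : (Finset.univ.filter fun i => w i ≠ 0).card ≤ n := by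
    calc (Finset.univ.filter fun i => w i ≠ 0).card ≤ (Finset.univ : Finset (Fin n)).card :=
        Finset.card_filter_le _ _
      _ = n := by simp
  obtain ⟨k, lam, gs, hk, hint, hlam, hconf, hsum⟩ := decomp A n w hwW hcardn
  -- sign facts
  have hpos : ∀ i p, 0 < w i → 0 ≤ gs p i := by
    intro i p hwi
    by_contra hc
    push_neg at hc
    have hne : gs p i ≠ 0 := hc.ne
    have h1 := hconf p i hne
    have h2 : ((gs p i : ℤ) : ℝ) < 0 := by exact_mod_cast hc
    nlinarith
  have hneg : ∀ i p, w i < 0 → gs p i ≤ 0 := by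
    intro i p hwi
    by_contra hc
    push_neg at hc
    have hne : gs p i ≠ 0 := hc.ne'
    have h1 := hconf p i hne
    have h2 : (0:ℝ) < ((gs p i : ℤ) : ℝ) := by exact_mod_cast hc
    nlinarith
  have hzero : ∀ i p, w i = 0 → gs p i = 0 := by
    intro i p hwi
    by_contra hc
    have h1 := hconf p i hc
    rw [hwi, zero_mul] at h1
    exact lt_irrefl _ h1
  set xhat : Fin n → ℤ := fun i => z i + ∑ p, ⌊lam p⌋ * gs p i with hxhat
  have hcast : ∀ i, ((xhat i : ℝ)) = (z i : ℝ) + ∑ p, (⌊lam p⌋ : ℝ) * ((gs p i : ℝ)) := by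
    intro i
    simp only [hxhat]
    push_cast
    ring
  have hcast2 : ∀ i, ((xhat i : ℝ))
      = xstar i - ∑ p, (lam p - (⌊lam p⌋ : ℝ)) * ((gs p i : ℝ)) := by
    intro i
    have hsplit : ∑ p, (lam p - (⌊lam p⌋ : ℝ)) * ((gs p i : ℝ))
        = ∑ p, lam p * ((gs p i : ℝ)) - ∑ p, (⌊lam p⌋ : ℝ) * ((gs p i : ℝ)) := by
      rw [← Finset.sum_sub_distrib]
      exact Finset.sum_congr rfl fun p _ => by ring
    have h1 := hsum i
    simp only [hwdef] at h1
    rw [hcast i, hsplit]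
    linarith [h1]
  -- feasibility of xhat
  have hd : (fun i => ∑ p, (⌊lam p⌋ : ℝ) * ((gs p i : ℝ))) ∈ W := by
    have heq : (fun i => ∑ p, (⌊lam p⌋ : ℝ) * ((gs p i : ℝ)))
        = ∑ p, (⌊lam p⌋ : ℝ) • (fun i => ((gs p i : ℝ))) := by
      funext i
      rw [Finset.sum_apply]
      exact Finset.sum_congr rfl fun p _ => by simp
    rw [heq]
    exact Submodule.sum_mem _ fun p _ => Submodule.smul_mem _ _ (hint p).1.1
  have hfeashat : (A.map (Int.cast : ℤ → ℝ)).mulVec (fun i => ((xhat i : ℝ))) = b := by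
    have hxeq : (fun i => ((xhat i : ℝ)))
        = (fun i => ((z i : ℝ))) + (fun i => ∑ p, (⌊lam p⌋ : ℝ) * ((gs p i : ℝ))) := by
      funext i
      simp only [Pi.add_apply]
      exact hcast i
    rw [hxeq, Matrix.mulVec_add, hz.1]
    have hd0 : (A.map (Int.cast : ℤ → ℝ)).mulVec (fun i => ∑ p, (⌊lam p⌋ : ℝ) * ((gs p i : ℝ))) = 0 := by
      have := hd
      rw [hW, LinearMap.mem_ker, Matrix.mulVecLin_apply] at this
      exact this
    rw [hd0, add_zero]
  -- nonnegativity of xhat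
  have hfr : ∀ p, 0 ≤ lam p - (⌊lam p⌋ : ℝ) := fun p => sub_nonneg.2 (Int.floor_le _)
  have hfr1 : ∀ p, lam p - (⌊lam p⌋ : ℝ) ≤ 1 := fun p => by
    linarith [Int.lt_floor_add_one (lam p)]
  have hnonneg : ∀ i, 0 ≤ xhat i := by
    intro i
    rcases lt_trichotomy (w i) 0 with hwi | hwi | hwi
    · have hterm : ∀ p, (lam p - (⌊lam p⌋ : ℝ)) * ((gs p i : ℝ)) ≤ 0 := by
        intro p
        have h2 : ((gs p i : ℝ)) ≤ 0 := by exact_mod_cast hneg i p hwi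
        exact mul_nonpos_iff.2 (Or.inl ⟨hfr p, h2⟩)
      have hsumle : ∑ p, (lam p - (⌊lam p⌋ : ℝ)) * ((gs p i : ℝ)) ≤ 0 :=
        Finset.sum_nonpos fun p _ => hterm p
      have hx : (0:ℝ) ≤ ((xhat i : ℝ)) := by
        rw [hcast2 i]
        linarith [hfeas.2 i]
      exact_mod_cast hx
    · have heq : xhat i = z i := by
        simp only [hxhat]
        rw [Finset.sum_eq_zero (fun p _ => by rw [hzero i p hwi, mul_zero]), add_zero]
      rw [heq]
      exact hz.2 i
    · have hterm : ∀ p, 0 ≤ ⌊lam p⌋ * gs p i := fun p =>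
        mul_nonneg (Int.floor_nonneg.2 (hlam p).le) (hpos i p hwi)
      have hsumge : 0 ≤ ∑ p, ⌊lam p⌋ * gs p i := Finset.sum_nonneg fun p _ => hterm p
      have := hz.2 i
      simp only [hxhat]
      omega
  -- cost of xhat
  have hcg : ∀ p, ∑ i, c i * ((gs p i : ℝ)) ≤ 0 := by
    intro p
    set y : Fin n → ℝ := fun i => xstar i - lam p * ((gs p i : ℝ)) with hy
    have hyfeas : (A.map (Int.cast : ℤ → ℝ)).mulVec y = b := by
      have heq : y = xstar - lam p • (fun i => ((gs p i : ℝ))) := by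
        funext i; simp [hy]
      rw [heq, Matrix.mulVec_sub, hfeas.1]
      have h0 : (A.map (Int.cast : ℤ → ℝ)).mulVec (lam p • (fun i => ((gs p i : ℝ)))) = 0 := by
        have hmem : lam p • (fun i => ((gs p i : ℝ))) ∈ W :=
          Submodule.smul_mem _ _ (hint p).1.1
        rw [hW, LinearMap.mem_ker, Matrix.mulVecLin_apply] at hmem
        exact hmem
      rw [h0, sub_zero]
    have hynn : ∀ i, 0 ≤ y i := by
      intro i
      rcases lt_trichotomy (w i) 0 with hwi | hwi | hwi
      · have h2 : ((gs p i : ℝ)) ≤ 0 := by exact_mod_cast hneg i p hwi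
        have h3 : lam p * ((gs p i : ℝ)) ≤ 0 :=
          mul_nonpos_iff.2 (Or.inl ⟨(hlam p).le, h2⟩)
        simp only [hy]
        linarith [hfeas.2 i]
      · simp only [hy, hzero i p hwi]
        simp only [Int.cast_zero, mul_zero, sub_zero]
        exact hfeas.2 i
      · have h1 : xstar i = (z i : ℝ) + ∑ q, lam q * ((gs q i : ℝ)) := by
          have := hsum i
          simp only [hwdef] at this
          linarith
        have hterm : ∀ q, 0 ≤ lam q * ((gs q i : ℝ)) := fun q =>
          mul_nonneg (hlam q).le (by exact_mod_cast hpos i q hwi)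
        have hsingle : lam p * ((gs p i : ℝ)) ≤ ∑ q, lam q * ((gs q i : ℝ)) :=
          Finset.single_le_sum (fun q _ => hterm q) (Finset.mem_univ p)
        have hzi : (0:ℝ) ≤ (z i : ℝ) := by exact_mod_cast hz.2 i
        simp only [hy]
        linarith
    have h1 := hopt y ⟨hyfeas, hynn⟩
    have hexp : ∑ i, c i * y i = ∑ i, c i * xstar i - lam p * ∑ i, c i * ((gs p i : ℝ)) := by
      simp only [hy]
      rw [Finset.mul_sum, ← Finset.sum_sub_distrib]
      exact Finset.sum_congr rfl fun i _ => by ring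
    rw [hexp] at h1
    by_contra hS
    push_neg at hS
    nlinarith [mul_pos (hlam p) hS]
  have hcost : ∑ i, c i * ((xhat i : ℝ)) ≤ ∑ i, c i * (z i : ℝ) := by
    have hswap : ∑ i, c i * ((xhat i : ℝ))
        = ∑ i, c i * (z i : ℝ) + ∑ p, (⌊lam p⌋ : ℝ) * ∑ i, c i * ((gs p i : ℝ)) := by
      calc ∑ i, c i * ((xhat i : ℝ))
          = ∑ i, (c i * (z i : ℝ) + ∑ p, (⌊lam p⌋ : ℝ) * (c i * ((gs p i : ℝ)))) := by
            refine Finset.sum_congr rfl fun i _ => ?_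
            rw [hcast i, mul_add, Finset.mul_sum]
            congr 1
            exact Finset.sum_congr rfl fun p _ => by ring
        _ = ∑ i, c i * (z i : ℝ) + ∑ i, ∑ p, (⌊lam p⌋ : ℝ) * (c i * ((gs p i : ℝ))) :=
            Finset.sum_add_distrib
        _ = ∑ i, c i * (z i : ℝ) + ∑ p, (⌊lam p⌋ : ℝ) * ∑ i, c i * ((gs p i : ℝ)) := by
            congr 1
            rw [Finset.sum_comm]
            exact Finset.sum_congr rfl fun p _ => by rw [Finset.mul_sum]
    rw [hswap]
    have hle : ∑ p, (⌊lam p⌋ : ℝ) * ∑ i, c i * ((gs p i : ℝ)) ≤ 0 :=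
      Finset.sum_nonpos fun p _ => mul_nonpos_iff.2
        (Or.inl ⟨by exact_mod_cast Int.floor_nonneg.2 (hlam p).le, hcg p⟩)
    linarith
  -- distance
  have hdist : ∀ i, |((xhat i : ℝ)) - xstar i| ≤ n * (barKappa W : ℝ) := by
    intro i
    have habs : |((xhat i : ℝ)) - xstar i|
        = |∑ p, (lam p - (⌊lam p⌋ : ℝ)) * ((gs p i : ℝ))| := by
      rw [hcast2 i]
      rw [sub_sub_cancel_left, abs_neg]
    rw [habs]
    have hstep1 : |∑ p, (lam p - (⌊lam p⌋ : ℝ)) * ((gs p i : ℝ))|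
        ≤ ∑ p, |(lam p - (⌊lam p⌋ : ℝ)) * ((gs p i : ℝ))| :=
      Finset.abs_sum_le_sum_abs _ _
    have hstep2 : ∑ p, |(lam p - (⌊lam p⌋ : ℝ)) * ((gs p i : ℝ))|
        ≤ ∑ _p : Fin k, (barKappa W : ℝ) := by
      refine Finset.sum_le_sum fun p _ => ?_
      rw [abs_mul, abs_of_nonneg (hfr p)]
      have hb2 : |((gs p i : ℝ))| ≤ (barKappa W : ℝ) := by
        have h1 := natAbs_le_barKappa (hint p) i
        have h2 : |((gs p i : ℝ))| = ((gs p i).natAbs : ℝ) := by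
          rw [Nat.cast_natAbs, Int.cast_abs]
        rw [h2]
        exact_mod_cast h1
      calc (lam p - (⌊lam p⌋ : ℝ)) * |((gs p i : ℝ))| ≤ 1 * (barKappa W : ℝ) :=
          mul_le_mul (hfr1 p) hb2 (abs_nonneg _) zero_le_one
        _ = (barKappa W : ℝ) := one_mul _
    have hstep3 : ∑ _p : Fin k, (barKappa W : ℝ) = (k : ℝ) * (barKappa W : ℝ) := by
      rw [Finset.sum_const, Finset.card_univ, Fintype.card_fin, nsmul_eq_mul]
    have hstep4 : (k : ℝ) * (barKappa W : ℝ) ≤ (n : ℝ) * (barKappa W : ℝ) :=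
      mul_le_mul_of_nonneg_right (by exact_mod_cast hk) (Nat.cast_nonneg _)
    calc |∑ p, (lam p - (⌊lam p⌋ : ℝ)) * ((gs p i : ℝ))|
        ≤ ∑ p, |(lam p - (⌊lam p⌋ : ℝ)) * ((gs p i : ℝ))| := hstep1
      _ ≤ ∑ _p : Fin k, (barKappa W : ℝ) := hstep2
      _ = (k : ℝ) * (barKappa W : ℝ) := hstep3
      _ ≤ (n : ℝ) * (barKappa W : ℝ) := hstep4
  exact ⟨xhat, ⟨hfeashat, hnonneg⟩, hcost, hdist⟩


end IPProximityAux

/-- integer programming proximity: if `x*` is an optimal solution of the LP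
`min ⟨c,x⟩, Ax = b, x ≥ 0` and the corresponding IP is feasible, then the IP has an
optimal solution `x̂` with `‖x̂ − x*‖_∞ ≤ n · κ̄_A`. -/
theorem ip_proximity {m n : ℕ} (A : Matrix (Fin m) (Fin n) ℤ) (b : Fin m → ℝ)
    (c : Fin n → ℝ) (xstar : Fin n → ℝ)
    (hfeas : (A.map (Int.cast : ℤ → ℝ)).mulVec xstar = b ∧ ∀ i, 0 ≤ xstar i)
    (hopt : ∀ x : Fin n → ℝ, ((A.map (Int.cast : ℤ → ℝ)).mulVec x = b ∧ ∀ i, 0 ≤ x i) →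
      ∑ i, c i * xstar i ≤ ∑ i, c i * x i)
    (hIPfeas : ∃ x : Fin n → ℤ,
      (A.map (Int.cast : ℤ → ℝ)).mulVec (fun i => ((x i : ℝ))) = b ∧ ∀ i, 0 ≤ x i) :
    ∃ xhat : Fin n → ℤ,
      ((A.map (Int.cast : ℤ → ℝ)).mulVec (fun i => ((xhat i : ℝ))) = b ∧ ∀ i, 0 ≤ xhat i) ∧
      (∀ x : Fin n → ℤ,
        ((A.map (Int.cast : ℤ → ℝ)).mulVec (fun i => ((x i : ℝ))) = b ∧ ∀ i, 0 ≤ x i) →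
        ∑ i, c i * (xhat i : ℝ) ≤ ∑ i, c i * (x i : ℝ)) ∧
      ∀ i, |(xhat i : ℝ) - xstar i| ≤
        n * (barKappa (LinearMap.ker (A.map (Int.cast : ℤ → ℝ)).mulVecLin) : ℝ) := by
  classical
  set B : ℝ := n * (barKappa (LinearMap.ker (A.map (Int.cast : ℤ → ℝ)).mulVecLin) : ℝ) with hB
  set Box : Set (Fin n → ℤ) := {x |
    ((A.map (Int.cast : ℤ → ℝ)).mulVec (fun i => ((x i : ℝ))) = b ∧ ∀ i, 0 ≤ x i) ∧
    ∀ i, |(x i : ℝ) - xstar i| ≤ B} with hBox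
  have hBoxFin : Box.Finite := by
    apply Set.Finite.subset (Set.Finite.pi
      (fun i : Fin n => Set.finite_Icc (⌈xstar i - B⌉) (⌊xstar i + B⌋)))
    intro x hx
    rw [Set.mem_pi]
    intro i _
    have hdist := hx.2 i
    have h1 := abs_le.1 hdist
    constructor
    · exact Int.ceil_le.2 (by linarith [h1.1])
    · exact Int.le_floor.2 (by linarith [h1.2])
  obtain ⟨z0, hz0⟩ := hIPfeas
  obtain ⟨x0, hx0feas, _, hx0dist⟩ := key_step A b c xstar hfeas hopt z0 hz0
  have hx0Box : x0 ∈ Box := ⟨hx0feas, fun i => by rw [hB]; exact hx0dist i⟩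
  obtain ⟨xhat, hxhatBox, hmin⟩ := Set.exists_min_image Box
    (fun x => ∑ i, c i * (x i : ℝ)) hBoxFin ⟨x0, hx0Box⟩
  refine ⟨xhat, hxhatBox.1, ?_, fun i => hxhatBox.2 i⟩
  intro x hx
  obtain ⟨x', hx'feas, hx'cost, hx'dist⟩ := key_step A b c xstar hfeas hopt x hx
  have hx'Box : x' ∈ Box := ⟨hx'feas, fun i => by rw [hB]; exact hx'dist i⟩
  exact le_trans (hmin x' hx'Box) hx'cost
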